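/- The 2-dimensional Lebesgue measure of the set of pairs (s,t) in the unit square [0,1]² for which the three lengths p = min(s,t), q = |s-t| and r = 1-max(s,t) are all positive and satisfy max(p, q, r)³ < 4·p·q·r equals 5/27. (This is the probability that three circles with these radii can be placed mutually externally tangent and inscribed in a triangle with each circle tangent to the sides, since such a configuration exists if and only if max(p,q,r)³ < 4pqr.) -/

import Mathlib

open MeasureTheory Set Real intervalIntegral

noncomputable def bsF (s : ℝ) : ℝ :=
  max (1 + 2*s - 2*Real.sqrt s) ((1 + s - Real.sqrt (1 - 2*s))/2)

noncomputable def bsG (s : ℝ) : ℝ :=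
  min (2*Real.sqrt s - s) ((1 + s + Real.sqrt (1 - 2*s))/2)

def bsP (s t : ℝ) : Prop :=
  s ∈ Set.Icc (0:ℝ) 1 ∧ t ∈ Set.Icc (0:ℝ) 1 ∧
  0 < min s t ∧ 0 < |s - t| ∧ 0 < 1 - max s t ∧
  max (min s t) (max (|s - t|) (1 - max s t)) ^ 3 <
    4 * min s t * |s - t| * (1 - max s t)

lemma bsP_symm {s t : ℝ} (h : bsP s t) : bsP t s := by
  unfold bsP at *
  rw [min_comm t s, max_comm t s, abs_sub_comm t s]
  tauto

lemma cube_iff {s t : ℝ} (hs : 0 < s) (hst : s < t) (ht : t < 1) :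
    max s (max (t - s) (1 - t)) ^ 3 < 4 * s * (t - s) * (1 - t) ↔
      (s^2 < 4*(t-s)*(1-t) ∧ (t-s)^2 < 4*s*(1-t) ∧ (1-t)^2 < 4*s*(t-s)) := by
  have hq : 0 < t - s := by linarith
  have hr : 0 < 1 - t := by linarith
  constructor
  · intro h
    have h1 : s ≤ max s (max (t-s) (1-t)) := le_max_left _ _
    have h2 : t - s ≤ max s (max (t-s) (1-t)) := le_trans (le_max_left _ _) (le_max_right _ _)
    have h3 : 1 - t ≤ max s (max (t-s) (1-t)) := le_trans (le_max_right _ _) (le_max_right _ _)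
    have hm : 0 < max s (max (t-s) (1-t)) := lt_of_lt_of_le hs h1
    refine ⟨?_, ?_, ?_⟩
    · have hc : s^3 < 4 * s * (t-s) * (1-t) :=
        lt_of_le_of_lt (pow_le_pow_left₀ hs.le h1 3) h
      nlinarith [hc]
    · have hc : (t-s)^3 < 4 * s * (t-s) * (1-t) :=
        lt_of_le_of_lt (pow_le_pow_left₀ hq.le h2 3) h
      nlinarith [hc]
    · have hc : (1-t)^3 < 4 * s * (t-s) * (1-t) :=
        lt_of_le_of_lt (pow_le_pow_left₀ hr.le h3 3) h
      nlinarith [hc]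
  · rintro ⟨hA, hB, hC⟩
    have hcases : max s (max (t-s) (1-t)) = s ∨ max s (max (t-s) (1-t)) = t - s ∨
        max s (max (t-s) (1-t)) = 1 - t := by
      rcases max_choice s (max (t-s) (1-t)) with h | h
      · exact Or.inl h
      · rcases max_choice (t-s) (1-t) with h' | h' <;> rw [h, h']
        · exact Or.inr (Or.inl rfl)
        · exact Or.inr (Or.inr rfl)
    rcases hcases with h | h | h <;> rw [h] <;> nlinarith

section helpers

private lemma helpB {s t a : ℝ} (ha2 : a^2 = s) (h0 : 0 < t + s) (h2 : t + s < 2*a) :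
    (t-s)^2 < 4*s*(1-t) := by
  nlinarith [mul_pos (by linarith : (0:ℝ) < 2*a - (t+s)) (by linarith : (0:ℝ) < 2*a + (t+s))]

private lemma helpC {s t a : ℝ} (ha2 : a^2 = s) (h1 : 1 + 2*s - t < 2*a)
    (h2 : -(2*a) < 1 + 2*s - t) : (1-t)^2 < 4*s*(t-s) := by
  nlinarith [mul_pos (by linarith : (0:ℝ) < 2*a - (1+2*s-t)) (by linarith : (0:ℝ) < 2*a + (1+2*s-t))]

private lemma helpA {s t b : ℝ} (hb2 : b^2 = 1 - 2*s) (h1 : 2*t - 1 - s < b)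
    (h2 : -b < 2*t - 1 - s) : s^2 < 4*(t-s)*(1-t) := by
  nlinarith [mul_pos (by linarith : (0:ℝ) < b - (2*t-1-s)) (by linarith : (0:ℝ) < b + (2*t-1-s)),
    sq_nonneg s]

private lemma convB {s t a : ℝ} (ha2 : a^2 = s) (ha0 : 0 ≤ a)
    (h : (t-s)^2 < 4*s*(1-t)) (h0 : 0 < t + s) : t + s < 2*a := by
  by_contra hcon
  push_neg at hcon
  have h1 : (2*a)^2 ≤ (t+s)^2 := pow_le_pow_left₀ (by linarith) hcon 2
  nlinarith [h1, ha2, h]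

private lemma convC {s t a : ℝ} (ha2 : a^2 = s) (ha0 : 0 ≤ a)
    (h : (1-t)^2 < 4*s*(t-s)) : 1 + 2*s - 2*a < t := by
  by_contra hcon
  push_neg at hcon
  have h1 : (2*a)^2 ≤ (1+2*s-t)^2 := pow_le_pow_left₀ (by linarith) (by linarith) 2
  nlinarith [h1, ha2, h]

private lemma convA1 {s t b : ℝ} (hb2 : b^2 = 1 - 2*s) (hb0 : 0 ≤ b)
    (h : s^2 < 4*(t-s)*(1-t)) : 2*t - 1 - s < b := by
  by_contra hcon
  push_neg at hcon
  have h1 : b^2 ≤ (2*t-1-s)^2 := pow_le_pow_left₀ hb0 hcon 2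
  nlinarith [h1, hb2, h, sq_nonneg s]

private lemma convA2 {s t b : ℝ} (hb2 : b^2 = 1 - 2*s) (hb0 : 0 ≤ b)
    (h : s^2 < 4*(t-s)*(1-t)) : -b < 2*t - 1 - s := by
  by_contra hcon
  push_neg at hcon
  have h1 : b^2 ≤ (2*t-1-s)^2 := by
    calc b^2 ≤ (-(2*t-1-s))^2 := pow_le_pow_left₀ hb0 (by linarith) 2
      _ = (2*t-1-s)^2 := by ring
  nlinarith [h1, hb2, h, sq_nonneg s]

private lemma helpblt {s b : ℝ} (hb2 : b^2 = 1 - 2*s) (hb0 : 0 ≤ b) (hs0 : 0 < s) :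
    b < 1 - s := by nlinarith

end helpers

lemma region_lt {s t : ℝ} (h : (s, t) ∈ regionBetween bsF bsG (Set.Ioo (1/9:ℝ) (1/2))) :
    s < t := by
  obtain ⟨⟨hs1, hs2⟩, ht1, -⟩ := h
  simp only at ht1 hs1 hs2
  have hs0 : (0:ℝ) < s := by linarith
  have hb2 : Real.sqrt (1 - 2*s) ^ 2 = 1 - 2*s := Real.sq_sqrt (by linarith)
  have hb0 : 0 ≤ Real.sqrt (1 - 2*s) := Real.sqrt_nonneg _
  have hblt : Real.sqrt (1 - 2*s) < 1 - s := helpblt hb2 hb0 hs0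
  calc s < (1 + s - Real.sqrt (1 - 2*s))/2 := by linarith
    _ ≤ bsF s := le_max_right _ _
    _ < t := ht1

set_option maxHeartbeats 1600000 in
lemma mem_iff_lt {s t : ℝ} (hst : s < t) :
    bsP s t ↔ (s ∈ Set.Ioo (1/9:ℝ) (1/2) ∧ t ∈ Set.Ioo (bsF s) (bsG s)) := by
  have hmin : min s t = s := min_eq_left hst.le
  have hmax : max s t = t := max_eq_right hst.le
  have habs : |s - t| = t - s := by rw [abs_sub_comm]; exact abs_of_pos (by linarith)
  constructor
  · rintro ⟨hs01, ht01, hp, hq, hr, hcube⟩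
    rw [hmin] at hp
    rw [hmax] at hr
    rw [hmin, hmax, habs] at hcube
    have ht1 : t < 1 := by linarith
    obtain ⟨hA, hB, hC⟩ := (cube_iff hp hst ht1).mp hcube
    clear hcube hs01 ht01 hq hmin hmax habs
    have hs12 : s < 1/2 := by nlinarith [sq_nonneg (2*t - 1 - s), sq_nonneg s]
    set a := Real.sqrt s with hadef
    set b := Real.sqrt (1 - 2*s) with hbdef
    have ha2 : a^2 = s := Real.sq_sqrt hp.le
    have hb2 : b^2 = 1 - 2*s := Real.sq_sqrt (by linarith)
    have ha0 : 0 ≤ a := Real.sqrt_nonneg _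
    have hb0 : 0 ≤ b := Real.sqrt_nonneg _
    have ha1 : a < 1 := by nlinarith [ha2, ha0]
    have hap : 0 < a := hadef ▸ Real.sqrt_pos.mpr hp
    have hBa : t + s < 2*a := convB ha2 ha0 hB (by linarith)
    have hCa : 1 + 2*s - 2*a < t := convC ha2 ha0 hC
    have hA1 : 2*t - 1 - s < b := convA1 hb2 hb0 hA
    have hA2 : -b < 2*t - 1 - s := convA2 hb2 hb0 hA
    clear hA hB hC hr ht1
    have hkey : 3*a^2 - 4*a + 1 < 0 := by nlinarith [hBa, hCa, ha2]
    have ha3 : 1/3 < a := by nlinarith [hkey, ha1]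
    have hs19 : 1/9 < s := by nlinarith [ha2, ha3, ha0]
    refine ⟨⟨hs19, hs12⟩, ?_, ?_⟩
    · simp only [bsF, ← hadef, ← hbdef]
      exact max_lt (by linarith) (by linarith)
    · simp only [bsG, ← hadef, ← hbdef]
      exact lt_min (by linarith) (by linarith)
  · rintro ⟨⟨hs19, hs12⟩, htF, htG⟩
    simp only [bsF] at htF
    simp only [bsG] at htG
    set a := Real.sqrt s with hadef
    set b := Real.sqrt (1 - 2*s) with hbdef
    have hs0 : (0:ℝ) < s := by linarith
    have ha2 : a^2 = s := Real.sq_sqrt hs0.le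
    have hb2 : b^2 = 1 - 2*s := Real.sq_sqrt (by linarith)
    have ha0 : 0 ≤ a := Real.sqrt_nonneg _
    have hb0 : 0 ≤ b := Real.sqrt_nonneg _
    have ha1 : a < 1 := by nlinarith [ha2, ha0]
    obtain ⟨hF1, hF2⟩ := max_lt_iff.mp htF
    obtain ⟨hG1, hG2⟩ := lt_min_iff.mp htG
    have hblt : b < 1 - s := helpblt hb2 hb0 hs0
    have hst' : s < t := by linarith
    have ht1 : t < 1 := by nlinarith [sq_nonneg (a - 1), ha2, hG1]
    have hB : (t-s)^2 < 4*s*(1-t) := helpB ha2 (by linarith) (by linarith)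
    have hC : (1-t)^2 < 4*s*(t-s) := helpC ha2 (by linarith) (by linarith)
    have hA : s^2 < 4*(t-s)*(1-t) := helpA hb2 (by linarith) (by linarith)
    refine ⟨⟨by linarith, by linarith⟩, ⟨by linarith, by linarith⟩, ?_, ?_, ?_, ?_⟩
    · rw [hmin]; exact hs0
    · rw [habs]; linarith
    · rw [hmax]; linarith
    · rw [hmin, hmax, habs]
      exact (cube_iff hs0 hst' ht1).mpr ⟨hA, hB, hC⟩

lemma cont_bsF : Continuous bsF := by unfold bsF; fun_prop
lemma cont_bsG : Continuous bsG := by unfold bsG; fun_prop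

lemma integrableOn_bsF : IntegrableOn bsF (Set.Ioo (1/9:ℝ) (1/2)) :=
  (cont_bsF.integrableOn_Icc).mono_set Set.Ioo_subset_Icc_self

lemma integrableOn_bsG : IntegrableOn bsG (Set.Ioo (1/9:ℝ) (1/2)) :=
  (cont_bsG.integrableOn_Icc).mono_set Set.Ioo_subset_Icc_self

section keys

private lemma key1 {x a : ℝ} (ha2 : a^2 = x) (h13 : 1/3 ≤ a) (ha1 : a ≤ 1) :
    1 + 3*x ≤ 4*a := by nlinarith [mul_nonneg (by linarith : (0:ℝ) ≤ 3*a - 1) (by linarith : (0:ℝ) ≤ 1 - a)]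

private lemma key2 {x a b : ℝ} (ha2 : a^2 = x) (hb2 : b^2 = 1 - 2*x) (ha0 : 0 ≤ a)
    (hb0 : 0 ≤ b) (ha23 : a ≤ 2/3) : 4*a - 1 - 3*x ≤ b := by
  rcases le_or_gt (4*a - 1 - 3*x) 0 with h | h
  · linarith
  · have hq : (0:ℝ) ≤ 3*a^2 - 6*a + 4 := by nlinarith [sq_nonneg (a - 1)]
    have hP : (4*a - 1 - 3*x)^2 ≤ b^2 := by
      nlinarith [mul_nonneg (mul_nonneg ha0 (by linarith : (0:ℝ) ≤ 2 - 3*a)) hq]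
    nlinarith [hP, hb0, h]

private lemma key3 {x a b : ℝ} (ha2 : a^2 = x) (hb2 : b^2 = 1 - 2*x) (ha0 : 0 ≤ a)
    (hb0 : 0 ≤ b) (ha23 : 2/3 ≤ a) (ha1 : a ≤ 1) : b ≤ 4*a - 1 - 3*x := by
  have hc0 : (0:ℝ) ≤ 4*a - 1 - 3*x := by
    nlinarith [mul_nonneg (by linarith : (0:ℝ) ≤ 3*a - 1) (by linarith : (0:ℝ) ≤ 1 - a)]
  have hq : (0:ℝ) ≤ 3*a^2 - 6*a + 4 := by nlinarith [sq_nonneg (a - 1)]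
  have hP : b^2 ≤ (4*a - 1 - 3*x)^2 := by
    nlinarith [mul_nonneg (mul_nonneg ha0 (by linarith : (0:ℝ) ≤ 3*a - 2)) hq]
  nlinarith [hP, hb0, hc0]

end keys

lemma sqrt_facts {x : ℝ} (h1 : 1/9 ≤ x) (h2 : x ≤ 1/2) :
    Real.sqrt x ^ 2 = x ∧ Real.sqrt (1-2*x) ^ 2 = 1 - 2*x ∧
    1/3 ≤ Real.sqrt x ∧ Real.sqrt x ≤ 1 := by
  have ha2 : Real.sqrt x ^ 2 = x := Real.sq_sqrt (by linarith)
  have ha0 : 0 ≤ Real.sqrt x := Real.sqrt_nonneg _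
  refine ⟨ha2, Real.sq_sqrt (by linarith), by nlinarith, by nlinarith⟩

lemma bsF_le_bsG {s : ℝ} (h : s ∈ Set.Icc (1/9:ℝ) (1/2)) : bsF s ≤ bsG s := by
  obtain ⟨h1, h2⟩ := h
  obtain ⟨ha2, hb2, h13, ha1⟩ := sqrt_facts h1 h2
  have hb0 : 0 ≤ Real.sqrt (1-2*s) := Real.sqrt_nonneg _
  have hk := key1 ha2 h13 ha1
  unfold bsF bsG
  refine max_le (le_min (by linarith) (by linarith)) (le_min (by linarith) (by linarith))

lemma eqOn1 {x : ℝ} (h : x ∈ Set.Icc (1/9:ℝ) (4/9)) :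
    (bsG - bsF) x = 4*Real.sqrt x - 3*x - 1 := by
  obtain ⟨h1, h2⟩ := h
  obtain ⟨ha2, hb2, h13, ha1⟩ := sqrt_facts h1 (by linarith)
  have ha0 : 0 ≤ Real.sqrt x := Real.sqrt_nonneg _
  have hb0 : 0 ≤ Real.sqrt (1-2*x) := Real.sqrt_nonneg _
  have ha23 : Real.sqrt x ≤ 2/3 := by nlinarith
  have hk := key2 ha2 hb2 ha0 hb0 ha23
  have hF : bsF x = 1 + 2*x - 2*Real.sqrt x := max_eq_left (by linarith)
  have hG : bsG x = 2*Real.sqrt x - x := min_eq_left (by linarith)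
  simp only [Pi.sub_apply, hF, hG]; ring

lemma eqOn2 {x : ℝ} (h : x ∈ Set.Icc (4/9:ℝ) (1/2)) :
    (bsG - bsF) x = Real.sqrt (1 - 2*x) := by
  obtain ⟨h1, h2⟩ := h
  obtain ⟨ha2, hb2, h13, ha1⟩ := sqrt_facts (by linarith) h2
  have ha0 : 0 ≤ Real.sqrt x := Real.sqrt_nonneg _
  have hb0 : 0 ≤ Real.sqrt (1-2*x) := Real.sqrt_nonneg _
  have ha23 : 2/3 ≤ Real.sqrt x := by nlinarith
  have hk := key3 ha2 hb2 ha0 hb0 ha23 ha1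
  have hF : bsF x = (1 + x - Real.sqrt (1-2*x))/2 := max_eq_right (by linarith)
  have hG : bsG x = (1 + x + Real.sqrt (1-2*x))/2 := min_eq_right (by linarith)
  simp only [Pi.sub_apply, hF, hG]; ring

lemma ftc1 : ∫ x in (1/9:ℝ)..(4/9), (4*Real.sqrt x - 3*x - 1) = 13/162 := by
  have h : ∀ x ∈ Set.uIcc (1/9:ℝ) (4/9), HasDerivAt
      (fun y => (8/3)*(y*Real.sqrt y) - (3/2)*y^2 - y) (4*Real.sqrt x - 3*x - 1) x := by
    intro x hx
    rw [Set.uIcc_of_le (by norm_num)] at hx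
    have hx0 : (0:ℝ) < x := lt_of_lt_of_le (by norm_num) hx.1
    have hsq : Real.sqrt x * Real.sqrt x = x := Real.mul_self_sqrt hx0.le
    have hne : Real.sqrt x ≠ 0 := by positivity
    have h1 : HasDerivAt (fun y => y * Real.sqrt y)
        (1 * Real.sqrt x + x * (1/(2*Real.sqrt x))) x :=
      (hasDerivAt_id x).mul (Real.hasDerivAt_sqrt hx0.ne')
    have he : 1 * Real.sqrt x + x * (1/(2*Real.sqrt x)) = (3/2) * Real.sqrt x := by
      field_simp; linear_combination (-1 : ℝ) * hsq
    rw [he] at h1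
    have H := ((h1.const_mul (8/3:ℝ)).sub ((hasDerivAt_pow 2 x).const_mul (3/2:ℝ))).sub
      (hasDerivAt_id x)
    convert H using 1
    all_goals first | rfl | (simp; ring) | (norm_num; ring) | norm_num
  rw [intervalIntegral.integral_eq_sub_of_hasDerivAt h
    (by apply Continuous.intervalIntegrable; fun_prop)]
  have e1 : Real.sqrt (4/9:ℝ) = 2/3 := by
    rw [show (4/9:ℝ) = (2/3)^2 by norm_num, Real.sqrt_sq (by norm_num : (0:ℝ) ≤ 2/3)]
  have e2 : Real.sqrt (1/9:ℝ) = 1/3 := by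
    rw [show (1/9:ℝ) = (1/3)^2 by norm_num, Real.sqrt_sq (by norm_num : (0:ℝ) ≤ 1/3)]
  rw [e1, e2]; norm_num

lemma ftc2 : ∫ x in (4/9:ℝ)..(1/2), Real.sqrt (1 - 2*x) = 1/81 := by
  have hd : ∀ x ∈ Set.Ioo (4/9:ℝ) (1/2), HasDerivWithinAt
      (fun y => -(1/3) * ((1-2*y) * Real.sqrt (1-2*y))) (Real.sqrt (1-2*x)) (Set.Ioi x) x := by
    intro x hx
    have hu0 : (0:ℝ) < 1 - 2*x := by linarith [hx.2]
    have hsq : Real.sqrt (1-2*x) * Real.sqrt (1-2*x) = 1-2*x := Real.mul_self_sqrt hu0.le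
    have hne : Real.sqrt (1-2*x) ≠ 0 := by positivity
    have hu : HasDerivAt (fun y : ℝ => 1 - 2*y) (-2) x := by
      simpa using ((hasDerivAt_id x).const_mul (2:ℝ)).const_sub 1
    have hs : HasDerivAt (fun y : ℝ => Real.sqrt (1-2*y))
        (1/(2*Real.sqrt (1-2*x)) * (-2)) x :=
      (Real.hasDerivAt_sqrt hu0.ne').comp x hu
    have H := ((hu.mul hs).const_mul (-(1/3):ℝ))
    have he : -(1/3) * ((-2) * Real.sqrt (1-2*x) + (1-2*x) * (1/(2*Real.sqrt (1-2*x)) * (-2)))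
        = Real.sqrt (1-2*x) := by
      field_simp; linear_combination (-1 : ℝ) * hsq
    rw [he] at H
    exact H.hasDerivWithinAt
  have hcont : ContinuousOn (fun y : ℝ => -(1/3) * ((1-2*y) * Real.sqrt (1-2*y)))
      (Set.Icc (4/9) (1/2)) := by apply Continuous.continuousOn; fun_prop
  have hint : IntervalIntegrable (fun x : ℝ => Real.sqrt (1-2*x)) volume (4/9) (1/2) := by
    apply Continuous.intervalIntegrable; fun_prop
  rw [intervalIntegral.integral_eq_sub_of_hasDeriv_right_of_le (by norm_num) hcont hd hint]
  have e1 : Real.sqrt (1 - 2*(1/2:ℝ)) = 0 := by norm_num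
  have e2 : Real.sqrt (1 - 2*(4/9:ℝ)) = 1/3 := by
    rw [show (1:ℝ) - 2*(4/9) = (1/3)^2 by norm_num, Real.sqrt_sq (by norm_num : (0:ℝ) ≤ 1/3)]
  rw [e1, e2]; norm_num

lemma integral_value :
    ∫ y in Set.Ioo (1/9:ℝ) (1/2), (bsG - bsF) y = 5 / 54 := by
  rw [← MeasureTheory.integral_Ioc_eq_integral_Ioo,
    ← intervalIntegral.integral_of_le (by norm_num : (1/9:ℝ) ≤ 1/2)]
  have i1 : IntervalIntegrable (bsG - bsF) volume (1/9) (4/9) :=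
    ((cont_bsG.sub cont_bsF).intervalIntegrable _ _)
  have i2 : IntervalIntegrable (bsG - bsF) volume (4/9) (1/2) :=
    ((cont_bsG.sub cont_bsF).intervalIntegrable _ _)
  rw [← intervalIntegral.integral_add_adjacent_intervals i1 i2]
  have p1 : ∫ x in (1/9:ℝ)..(4/9), (bsG - bsF) x = 13/162 := by
    rw [intervalIntegral.integral_congr (g := fun x => 4*Real.sqrt x - 3*x - 1)
      (fun x hx => eqOn1 (by rwa [Set.uIcc_of_le (by norm_num)] at hx))]
    exact ftc1
  have p2 : ∫ x in (4/9:ℝ)..(1/2), (bsG - bsF) x = 1/81 := by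
    rw [intervalIntegral.integral_congr (g := fun x => Real.sqrt (1 - 2*x))
      (fun x hx => eqOn2 (by rwa [Set.uIcc_of_le (by norm_num)] at hx))]
    exact ftc2
  rw [p1, p2]; norm_num

lemma measurable_bsF : Measurable bsF := by
  unfold bsF; fun_prop

lemma measurable_bsG : Measurable bsG := by
  unfold bsG; fun_prop

theorem broken_stick_tangent_circles_prob :
    volume {p : ℝ × ℝ | p.1 ∈ Set.Icc (0:ℝ) 1 ∧ p.2 ∈ Set.Icc (0:ℝ) 1 ∧
      0 < min p.1 p.2 ∧ 0 < |p.1 - p.2| ∧ 0 < 1 - max p.1 p.2 ∧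
      max (min p.1 p.2) (max (|p.1 - p.2|) (1 - max p.1 p.2)) ^ 3 <
        4 * min p.1 p.2 * |p.1 - p.2| * (1 - max p.1 p.2)} =
    ENNReal.ofReal (5 / 27) := by
  set R := regionBetween bsF bsG (Set.Ioo (1/9:ℝ) (1/2)) with hR
  have hRmeas : MeasurableSet R :=
    measurableSet_regionBetween measurable_bsF measurable_bsG measurableSet_Ioo
  have hSeq : {p : ℝ × ℝ | p.1 ∈ Set.Icc (0:ℝ) 1 ∧ p.2 ∈ Set.Icc (0:ℝ) 1 ∧
      0 < min p.1 p.2 ∧ 0 < |p.1 - p.2| ∧ 0 < 1 - max p.1 p.2 ∧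
      max (min p.1 p.2) (max (|p.1 - p.2|) (1 - max p.1 p.2)) ^ 3 <
        4 * min p.1 p.2 * |p.1 - p.2| * (1 - max p.1 p.2)}
      = R ∪ Prod.swap ⁻¹' R := by
    ext ⟨s, t⟩
    show bsP s t ↔ _
    constructor
    · intro h
      rcases lt_trichotomy s t with hst | hst | hst
      · exact Or.inl ((mem_iff_lt hst).mp h)
      · exfalso; have := h.2.2.2.1; rw [hst] at this; simp at this
      · exact Or.inr ((mem_iff_lt hst).mp (bsP_symm h))
    · rintro (h | h)
      · exact (mem_iff_lt (region_lt h)).mpr h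
      · exact bsP_symm ((mem_iff_lt (region_lt h)).mpr h)
  rw [hSeq]
  have hdisj : Disjoint R (Prod.swap ⁻¹' R) := by
    rw [Set.disjoint_left]
    rintro ⟨s, t⟩ h1 h2
    exact absurd (region_lt h2) (not_lt.mpr (region_lt h1).le)
  rw [measure_union hdisj (measurable_swap hRmeas)]
  have hswap : volume (Prod.swap ⁻¹' R) = volume R := by
    rw [show (volume : Measure (ℝ × ℝ)) = Measure.prod volume volume from Measure.volume_eq_prod ℝ ℝ]
    exact (Measure.measurePreserving_swap (μ := volume) (ν := volume)).measure_preimage hRmeas.nullMeasurableSet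
  have hvol : volume R = ENNReal.ofReal (5 / 54) := by
    rw [show (volume : Measure (ℝ × ℝ)) = Measure.prod volume volume from Measure.volume_eq_prod ℝ ℝ, hR]
    rw [volume_regionBetween_eq_integral integrableOn_bsF integrableOn_bsG measurableSet_Ioo
      (fun x hx => bsF_le_bsG (Set.mem_Icc_of_Ioo hx)), integral_value]
  rw [hswap, hvol, ← ENNReal.ofReal_add (by norm_num) (by norm_num)]
  norm_num
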